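/- arXiv:2412.01763 — 2 statements merged into one kernel-verified Lean document; each statement's English description precedes it below -/
import Mathlib

section
/- The minimax risk Δ equals zero if and only if either G⁻(λ) ≥ ρ, or G⁻(λ) < ρ and λ = M. -/
open MeasureTheory Set

/-- Newsvendor cost of ordering quantity `q` under demand distribution `F`,
with underage cost `b` and overage cost `h`. -/
noncomputable def nvCost (b h : ℝ) (F : Measure ℝ) (q : ℝ) : ℝ :=
  ∫ x, (b * max (x - q) 0 + h * max (q - x) 0) ∂F

/-- Optimal newsvendor quantity: the `ρ`-th quantile of `F`. -/
noncomputable def qStar (ρ : ℝ) (F : Measure ℝ) : ℝ :=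
  sInf {q : ℝ | ρ ≤ (F (Iic q)).toReal}

/-- The set `𝒢` of admissible demand distributions: Borel probability measures on ℝ
supported on `[0, ∞)` with finite mean and optimal newsvendor quantity at most `M`. -/
def GoodDist (ρ M : ℝ) : Set (Measure ℝ) :=
  {F | IsProbabilityMeasure F ∧ F (Iio 0) = 0 ∧ Integrable id F ∧ qStar ρ F ≤ M}

/-- The ambiguity set `𝒜_λ`: all admissible distributions agreeing with `G` before `lam`. -/
def Ambig (ρ M : ℝ) (G : Measure ℝ) (lam : ℝ) : Set (Measure ℝ) :=
  {F | F ∈ GoodDist ρ M ∧ ∀ x < lam, F (Iic x) = G (Iic x)}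

/-- Worst-case regret of an ordering quantity `q` over the ambiguity set. -/
noncomputable def Regret (b h ρ M : ℝ) (G : Measure ℝ) (lam q : ℝ) : ℝ :=
  sSup ((fun F => nvCost b h F q - nvCost b h F (qStar ρ F)) '' Ambig ρ M G lam)

/-- Minimax risk `Δ`. -/
noncomputable def Risk (b h ρ M : ℝ) (G : Measure ℝ) (lam : ℝ) : ℝ :=
  sInf (Regret b h ρ M G lam '' Icc 0 M)

/-- The unidentifiable ordering quantity `q†_G`. -/
noncomputable def qDagger (b h M : ℝ) (G : Measure ℝ) (lam : ℝ) : ℝ :=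
  (b * M + h * lam - (b + h) * (G (Iio lam)).toReal * M) /
    ((b + h) * (1 - (G (Iio lam)).toReal))

/-- The two-point-tail distribution `F_p`: agrees with `G` on `[0, λ)`, places an atom
of mass `p` at `λ` and an atom of mass `1 - p - G⁻(λ)` at `M`. -/
noncomputable def Fp (G : Measure ℝ) (lam M p : ℝ) : Measure ℝ :=
  G.restrict (Iio lam) + ENNReal.ofReal p • Measure.dirac lam +
    ENNReal.ofReal (1 - p - (G (Iio lam)).toReal) • Measure.dirac M

/-- The `N`-fold product (i.i.d.) measure of `G` (equal to `Measure.pi` whenever `G`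
is sigma-finite, in particular for probability measures). -/
noncomputable def iidPi (N : ℕ) (G : Measure ℝ) : Measure (Fin N → ℝ) := by
  classical
  exact if h : SigmaFinite G then
    haveI := h
    Measure.pi fun _ => G
  else 0


noncomputable def cfun (b h q x : ℝ) : ℝ := b * max (x - q) 0 + h * max (q - x) 0

lemma cfun_eval {b h q x : ℝ} (hq : x ≤ q) : cfun b h q x = h * (q - x) := by
  unfold cfun
  have e1 : max (x - q) 0 = 0 := max_eq_right (by linarith)
  have e2 : max (q - x) 0 = q - x := max_eq_left (by linarith)
  rw [e1, e2]; ring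

lemma cfun_at_ge {b h q x : ℝ} (hqx : q ≤ x) : cfun b h q x = b * (x - q) := by
  unfold cfun
  have e1 : max (x - q) 0 = x - q := max_eq_left (by linarith)
  have e2 : max (q - x) 0 = 0 := max_eq_right (by linarith)
  rw [e1, e2]; ring

lemma cfun_self {b h q : ℝ} : cfun b h q q = 0 := by simp [cfun]

lemma measurable_cfun (b h q : ℝ) : Measurable (cfun b h q) := by
  unfold cfun
  exact (((measurable_id.sub measurable_const).max measurable_const).const_mul b).add
    (((measurable_const.sub measurable_id).max measurable_const).const_mul h)

lemma integrable_cfun {F : Measure ℝ} [IsFiniteMeasure F] (hF : Integrable id F) (b h q : ℝ) :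
    Integrable (cfun b h q) F := by
  have h1 : Integrable (fun x => x - q) F := hF.sub (integrable_const q)
  have h2 : Integrable (fun x => q - x) F := (integrable_const q).sub hF
  exact ((h1.sup (integrable_const 0)).const_mul b).add
    ((h2.sup (integrable_const 0)).const_mul h)

lemma cfun_diff_le {b h : ℝ} (hb : 0 ≤ b) (hh : 0 ≤ h) (q r x : ℝ) :
    cfun b h q x - cfun b h r x ≤ (b + h) * |q - r| := by
  have h1 : |max (x - q) 0 - max (x - r) 0| ≤ |q - r| := by
    have := abs_max_sub_max_le_abs (x - q) (x - r) 0
    have e : x - q - (x - r) = -(q - r) := by ring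
    rwa [e, abs_neg] at this
  have h2 : |max (q - x) 0 - max (r - x) 0| ≤ |q - r| := by
    have := abs_max_sub_max_le_abs (q - x) (r - x) 0
    have e : q - x - (r - x) = q - r := by ring
    rwa [e] at this
  have h1' := (abs_le.1 h1).2
  have h2' := (abs_le.1 h2).2
  unfold cfun
  nlinarith [mul_le_mul_of_nonneg_left h1' hb, mul_le_mul_of_nonneg_left h2' hh]

lemma cfun_subgrad_ge {b h : ℝ} (hb : 0 ≤ b) (hh : 0 ≤ h) {q r : ℝ} (hrq : r ≤ q) (x : ℝ) :
    (if x ≤ r then h else -b) * (q - r) ≤ cfun b h q x - cfun b h r x := by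
  rcases le_or_gt x r with hx | hx
  · have hxq : x ≤ q := hx.trans hrq
    rw [if_pos hx, cfun_eval hxq, cfun_eval hx]
    ring_nf
    nlinarith [mul_le_mul_of_nonneg_left (le_refl (q - r)) hh]
  · rw [if_neg (not_le.2 hx)]
    rcases le_or_gt x q with hxq | hxq
    · rw [cfun_eval hxq, cfun_at_ge hx.le]
      nlinarith
    · rw [cfun_at_ge hxq.le, cfun_at_ge hx.le]
      nlinarith

lemma cfun_subgrad_ge' {b h : ℝ} (hb : 0 ≤ b) (hh : 0 ≤ h) {q r : ℝ} (hqr : q ≤ r) (x : ℝ) :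
    (if x < r then h else -b) * (q - r) ≤ cfun b h q x - cfun b h r x := by
  rcases lt_or_ge x r with hx | hx
  · rw [if_pos hx]
    rcases le_or_gt x q with hxq | hxq
    · rw [cfun_eval hxq, cfun_eval hx.le]; nlinarith
    · rw [cfun_at_ge hxq.le, cfun_eval hx.le]; nlinarith
  · rw [if_neg (not_lt.2 hx)]
    rw [cfun_at_ge (hqr.trans hx), cfun_at_ge hx]
    nlinarith

lemma cfun_M_bound {b h : ℝ} (hb : 0 ≤ b) (hh : 0 ≤ h) {q M : ℝ} (hqM : q ≤ M) (x : ℝ) :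
    -(h * (M - q)) ≤ cfun b h q x - cfun b h M x := by
  refine le_trans ?_ (cfun_subgrad_ge' hb hh hqM x)
  by_cases hx : x < M
  · rw [if_pos hx]; nlinarith
  · rw [if_neg hx]; nlinarith

lemma cfun_shift {b h q lam x : ℝ} (hx : x ≤ lam) (hq : lam ≤ q) :
    cfun b h q x - cfun b h lam x = h * (q - lam) := by
  rw [cfun_eval (hx.trans hq), cfun_eval hx]; ring


section quantile
variable {ρ : ℝ} {F : Measure ℝ}

lemma SQ_bdd (h0 : F (Iio 0) = 0) (hρ : 0 < ρ) :
    ∀ q ∈ {q : ℝ | ρ ≤ (F (Iic q)).toReal}, 0 ≤ q := by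
  intro q hq
  by_contra hneg
  push_neg at hneg
  have : F (Iic q) = 0 :=
    measure_mono_null (fun x hx => lt_of_le_of_lt hx hneg) h0
  rw [Set.mem_setOf_eq, this] at hq
  simp at hq
  linarith

lemma qStar_nonneg (h0 : F (Iio 0) = 0) (hρ : 0 < ρ) : 0 ≤ qStar ρ F :=
  Real.sInf_nonneg (SQ_bdd h0 hρ)

lemma SQ_nonempty [IsProbabilityMeasure F] (hρ0 : 0 < ρ) (hρ1 : ρ < 1) :
    ∃ q : ℝ, ρ ≤ (F (Iic q)).toReal := by
  have ht := tendsto_measure_Iic_atTop (α := ℝ) F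
  rw [measure_univ] at ht
  have hlt : ENNReal.ofReal ρ < 1 := by
    rw [← ENNReal.ofReal_one]
    exact ENNReal.ofReal_lt_ofReal_iff (by norm_num) |>.2 hρ1
  rcases (ht.eventually (eventually_ge_nhds hlt)).exists with ⟨q, hq⟩
  refine ⟨q, ?_⟩
  have := ENNReal.toReal_mono (measure_ne_top F _) hq
  rwa [ENNReal.toReal_ofReal hρ0.le] at this

/-- Right-continuity: the CDF at the quantile is at least `ρ`. -/
lemma measure_Iic_qStar_ge [IsProbabilityMeasure F] (h0 : F (Iio 0) = 0)
    (hρ0 : 0 < ρ) (hρ1 : ρ < 1) : ρ ≤ (F (Iic (qStar ρ F))).toReal := by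
  set S := {q : ℝ | ρ ≤ (F (Iic q)).toReal} with hS
  have hne : S.Nonempty := SQ_nonempty hρ0 hρ1
  have hbdd : BddBelow S := ⟨0, SQ_bdd h0 hρ0⟩
  have hmem : ∀ ε > 0, sInf S + ε ∈ S := by
    intro ε hε
    obtain ⟨s, hsS, hs⟩ := (Real.lt_sInf_add_pos hne hε)
    exact le_trans hsS (ENNReal.toReal_mono (measure_ne_top F _)
      (measure_mono (Iic_subset_Iic.2 hs.le)))
  -- intersection representation
  have hset : Iic (sInf S) = ⋂ n : ℕ, Iic (sInf S + ((n : ℝ) + 1)⁻¹) := by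
    ext x
    simp only [mem_Iic, mem_iInter]
    constructor
    · intro hx n
      have : (0:ℝ) < ((n : ℝ) + 1)⁻¹ := by positivity
      linarith
    · intro hx
      refine le_of_forall_pos_le_add fun ε hε => ?_
      obtain ⟨n, hn⟩ := exists_nat_one_div_lt hε
      have := hx n
      rw [one_div] at hn
      linarith
    -- done
  have hanti : Antitone fun n : ℕ => Iic (sInf S + ((n : ℝ) + 1)⁻¹) := by
    intro m n hmn
    apply Iic_subset_Iic.2
    have : ((n : ℝ) + 1)⁻¹ ≤ ((m : ℝ) + 1)⁻¹ := by
      apply inv_anti₀ (by positivity)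
      have : (m:ℝ) ≤ n := Nat.cast_le.2 hmn; linarith
    linarith
  have hiInf : F (Iic (sInf S)) = ⨅ n : ℕ, F (Iic (sInf S + ((n : ℝ) + 1)⁻¹)) := by
    rw [hset]
    exact hanti.directed_ge.measure_iInter
      (fun n => (measurableSet_Iic).nullMeasurableSet)
      ⟨0, measure_ne_top F _⟩
  have hge : ENNReal.ofReal ρ ≤ F (Iic (sInf S)) := by
    rw [hiInf]
    refine le_iInf fun n => ?_
    have hmemn := hmem (((n : ℝ) + 1)⁻¹) (by positivity)
    rw [hS, Set.mem_setOf_eq] at hmemn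
    exact (ENNReal.ofReal_le_of_le_toReal hmemn)
  have := ENNReal.toReal_mono (measure_ne_top F _) hge
  rwa [ENNReal.toReal_ofReal hρ0.le] at this

/-- For `x` strictly below the quantile the CDF is `< ρ`. -/
lemma measure_Iic_lt_of_lt_qStar (h0 : F (Iio 0) = 0) (hρ0 : 0 < ρ) {x : ℝ}
    (hx : x < qStar ρ F) : (F (Iic x)).toReal < ρ := by
  by_contra hc
  push_neg at hc
  exact absurd (csInf_le ⟨0, SQ_bdd h0 hρ0⟩ hc) (not_le.2 hx)

/-- `Iio` as an increasing union of `Iic`s. -/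
lemma Iio_eq_iUnion (a : ℝ) : Iio a = ⋃ n : ℕ, Iic (a - ((n : ℝ) + 1)⁻¹) := by
  ext x
  simp only [mem_Iio, mem_iUnion, mem_Iic]
  constructor
  · intro hx
    obtain ⟨n, hn⟩ := exists_nat_one_div_lt (sub_pos.2 hx)
    rw [one_div] at hn
    exact ⟨n, by linarith⟩
  · rintro ⟨n, hn⟩
    have : (0:ℝ) < ((n : ℝ) + 1)⁻¹ := by positivity
    linarith

lemma measure_Iio_eq_iSup (F : Measure ℝ) (a : ℝ) :
    F (Iio a) = ⨆ n : ℕ, F (Iic (a - ((n : ℝ) + 1)⁻¹)) := by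
  rw [Iio_eq_iUnion]
  apply Monotone.measure_iUnion
  intro m n hmn
  apply Iic_subset_Iic.2
  have : ((n : ℝ) + 1)⁻¹ ≤ ((m : ℝ) + 1)⁻¹ := by
    apply inv_anti₀ (by positivity)
    have : (m:ℝ) ≤ n := Nat.cast_le.2 hmn; linarith
  linarith

/-- Left limit at the quantile is at most `ρ`. -/
lemma measure_Iio_qStar_le [IsFiniteMeasure F] (h0 : F (Iio 0) = 0) (hρ0 : 0 < ρ) :
    (F (Iio (qStar ρ F))).toReal ≤ ρ := by
  have hle : F (Iio (qStar ρ F)) ≤ ENNReal.ofReal ρ := by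
    rw [measure_Iio_eq_iSup]
    refine iSup_le fun n => ?_
    have hx : qStar ρ F - ((n : ℝ) + 1)⁻¹ < qStar ρ F := by
      have : (0:ℝ) < ((n : ℝ) + 1)⁻¹ := by positivity
      linarith
    have := measure_Iic_lt_of_lt_qStar h0 hρ0 hx
    exact ENNReal.le_ofReal_iff_toReal_le (measure_ne_top F _) hρ0.le |>.2 this.le
  have := ENNReal.toReal_mono ENNReal.ofReal_ne_top hle
  rwa [ENNReal.toReal_ofReal hρ0.le] at this

end quantile

section integrals
variable {b h ρ : ℝ} {F : Measure ℝ}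

lemma nvCost_eq (b h : ℝ) (F : Measure ℝ) (q : ℝ) :
    nvCost b h F q = ∫ x, cfun b h q x ∂F := rfl

lemma integral_step_Iic [IsProbabilityMeasure F] (b h r : ℝ) :
    ∫ x, (if x ≤ r then h else -b) ∂F = (b + h) * (F (Iic r)).toReal - b := by
  have he : (fun x : ℝ => if x ≤ r then h else -b)
      = fun x => (Iic r).indicator (fun _ => b + h) x + (-b) := by
    funext x
    by_cases hx : x ≤ r
    · simp [hx, Set.indicator_of_mem (mem_Iic.2 hx)]
    · simp [hx, Set.indicator_of_notMem (fun hc => hx (mem_Iic.1 hc))]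
  rw [he, integral_add ((integrable_const (b + h)).indicator measurableSet_Iic)
    (integrable_const _), integral_indicator_const _ measurableSet_Iic, integral_const,
    probReal_univ]
  simp [smul_eq_mul, Measure.real]; ring

lemma integral_step_Iio [IsProbabilityMeasure F] (b h r : ℝ) :
    ∫ x, (if x < r then h else -b) ∂F = (b + h) * (F (Iio r)).toReal - b := by
  have he : (fun x : ℝ => if x < r then h else -b)
      = fun x => (Iio r).indicator (fun _ => b + h) x + (-b) := by
    funext x
    by_cases hx : x < r
    · simp [hx, Set.indicator_of_mem (mem_Iio.2 hx)]
    · simp [hx, Set.indicator_of_notMem (fun hc => hx (mem_Iio.1 hc))]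
  rw [he, integral_add ((integrable_const (b + h)).indicator measurableSet_Iio)
    (integrable_const _), integral_indicator_const _ measurableSet_Iio, integral_const,
    probReal_univ]
  simp [smul_eq_mul, Measure.real]; ring

lemma integrable_step_le [IsFiniteMeasure F] (b h r : ℝ) :
    Integrable (fun x : ℝ => if x ≤ r then h else -b) F := by
  have he : (fun x : ℝ => if x ≤ r then h else -b)
      = fun x => (Iic r).indicator (fun _ => h - -b) x + (-b) := by
    funext x
    by_cases hx : x ≤ r
    · simp [hx, Set.indicator_of_mem (mem_Iic.2 hx)]
    · simp [hx, Set.indicator_of_notMem (fun hc => hx (mem_Iic.1 hc))]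
  rw [he]
  exact ((integrable_const _).indicator measurableSet_Iic).add (integrable_const _)

lemma integrable_step_lt [IsFiniteMeasure F] (b h r : ℝ) :
    Integrable (fun x : ℝ => if x < r then h else -b) F := by
  have he : (fun x : ℝ => if x < r then h else -b)
      = fun x => (Iio r).indicator (fun _ => h - -b) x + (-b) := by
    funext x
    by_cases hx : x < r
    · simp [hx, Set.indicator_of_mem (mem_Iio.2 hx)]
    · simp [hx, Set.indicator_of_notMem (fun hc => hx (mem_Iio.1 hc))]
  rw [he]
  exact ((integrable_const _).indicator measurableSet_Iio).add (integrable_const _)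

/-- Optimality of the quantile. -/
lemma nvCost_qStar_le [IsProbabilityMeasure F] (hb : 0 < b) (hh : 0 < h)
    (hρ : ρ = b / (b + h)) (h0 : F (Iio 0) = 0) (hint : Integrable id F) (q : ℝ) :
    nvCost b h F (qStar ρ F) ≤ nvCost b h F q := by
  have hbh : 0 < b + h := by linarith
  have hρ0 : 0 < ρ := hρ ▸ div_pos hb hbh
  have hρ1 : ρ < 1 := hρ ▸ (div_lt_one hbh).2 (by linarith)
  have hρb : (b + h) * ρ = b := by rw [hρ]; field_simp
  set r := qStar ρ F with hr
  have hintq := integrable_cfun hint b h q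
  have hintr := integrable_cfun hint b h r
  rw [nvCost_eq, nvCost_eq, ← sub_nonneg, ← integral_sub hintq hintr]
  rcases le_total r q with hrq | hqr
  · have hpt : ∀ x, (if x ≤ r then h else -b) * (q - r) ≤ cfun b h q x - cfun b h r x :=
      cfun_subgrad_ge hb.le hh.le hrq
    have hle : ∫ x, (if x ≤ r then h else -b) * (q - r) ∂F
        ≤ ∫ x, (cfun b h q x - cfun b h r x) ∂F :=
      integral_mono ((integrable_step_le b h r).mul_const _) (hintq.sub hintr) hpt
    refine le_trans ?_ hle
    rw [integral_mul_const, integral_step_Iic]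
    have hcdf : ρ ≤ (F (Iic r)).toReal := measure_Iic_qStar_ge h0 hρ0 hρ1
    have h1 : 0 ≤ (b + h) * (F (Iic r)).toReal - b := by nlinarith
    exact mul_nonneg h1 (sub_nonneg.2 hrq)
  · have hpt : ∀ x, (if x < r then h else -b) * (q - r) ≤ cfun b h q x - cfun b h r x :=
      cfun_subgrad_ge' hb.le hh.le hqr
    have hle : ∫ x, (if x < r then h else -b) * (q - r) ∂F
        ≤ ∫ x, (cfun b h q x - cfun b h r x) ∂F :=
      integral_mono ((integrable_step_lt b h r).mul_const _) (hintq.sub hintr) hpt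
    refine le_trans ?_ hle
    rw [integral_mul_const, integral_step_Iio]
    have hcdf : (F (Iio r)).toReal ≤ ρ := measure_Iio_qStar_le h0 hρ0
    have h1 : (b + h) * (F (Iio r)).toReal - b ≤ 0 := by nlinarith
    have h2 : q - r ≤ 0 := sub_nonpos.2 hqr
    nlinarith [mul_nonneg (neg_nonneg.2 h1) (neg_nonneg.2 h2)]

/-- Uniform regret upper bound. -/
lemma nvCost_diff_le [IsProbabilityMeasure F] (hb : 0 < b) (hh : 0 < h)
    (hint : Integrable id F) {M q r : ℝ} (hq : q ∈ Icc 0 M) (hr : r ∈ Icc 0 M) :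
    nvCost b h F q - nvCost b h F r ≤ (b + h) * M := by
  have hintq := integrable_cfun hint b h q
  have hintr := integrable_cfun hint b h r
  rw [nvCost_eq, nvCost_eq, ← integral_sub hintq hintr]
  have hpt : ∀ x, cfun b h q x - cfun b h r x ≤ (b + h) * M := by
    intro x
    refine le_trans (cfun_diff_le hb.le hh.le q r x) ?_
    have : |q - r| ≤ M := abs_le.2 ⟨by linarith [hq.1, hq.2, hr.1, hr.2],
      by linarith [hq.1, hq.2, hr.1, hr.2]⟩
    nlinarith
  calc ∫ x, (cfun b h q x - cfun b h r x) ∂F ≤ ∫ _, (b + h) * M ∂F :=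
        integral_mono (hintq.sub hintr) (integrable_const _) hpt
    _ = (b + h) * M := by rw [integral_const, probReal_univ]; simp

end integrals

section adv
variable {G : Measure ℝ} {lam a x : ℝ}

/-- Adversarial measure: `G` below `lam`, remaining mass as an atom at `a`. -/
noncomputable def advM (G : Measure ℝ) (lam a : ℝ) : Measure ℝ :=
  G.restrict (Iio lam) + (1 - G (Iio lam)) • Measure.dirac a

lemma advM_apply {s : Set ℝ} (hs : MeasurableSet s) :
    advM G lam a s = G (s ∩ Iio lam) + (1 - G (Iio lam)) * s.indicator 1 a := by
  simp [advM, Measure.restrict_apply hs, Measure.dirac_apply' _ hs, smul_eq_mul]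

lemma advM_gl_le_one [IsProbabilityMeasure G] : G (Iio lam) ≤ 1 :=
  le_trans (measure_mono (subset_univ _)) (le_of_eq measure_univ)

lemma advM_prob [IsProbabilityMeasure G] : IsProbabilityMeasure (advM G lam a) := by
  constructor
  rw [advM_apply MeasurableSet.univ]
  simp only [univ_inter, indicator_of_mem (mem_univ a), Pi.one_apply, mul_one]
  exact add_tsub_cancel_of_le advM_gl_le_one

lemma advM_toReal_one_sub [IsProbabilityMeasure G] :
    (1 - G (Iio lam)).toReal = 1 - (G (Iio lam)).toReal := by
  rw [ENNReal.toReal_sub_of_le advM_gl_le_one ENNReal.one_ne_top, ENNReal.toReal_one]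

lemma advM_Iio0 (h0 : G (Iio 0) = 0) (ha : 0 ≤ a) : advM G lam a (Iio 0) = 0 := by
  rw [advM_apply measurableSet_Iio]
  have h1 : G (Iio 0 ∩ Iio lam) = 0 :=
    measure_mono_null inter_subset_left h0
  have h2 : (Iio (0:ℝ)).indicator (1 : ℝ → ENNReal) a = 0 :=
    indicator_of_notMem (by simp [mem_Iio, not_lt, ha]) _
  rw [h1, h2, mul_zero, add_zero]

lemma advM_integrable (hint : Integrable id G) : Integrable id (advM G lam a) := by
  refine Integrable.add_measure (hint.restrict) ?_
  refine Integrable.smul_measure ?_ (ne_top_of_le_ne_top ENNReal.one_ne_top tsub_le_self)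
  exact (integrable_const a).congr (MeasureTheory.ae_eq_dirac (id : ℝ → ℝ)).symm

lemma advM_Iic_lt (hx : x < lam) (hxa : x < a) : advM G lam a (Iic x) = G (Iic x) := by
  have e : Iic x ∩ Iio lam = Iic x := inter_eq_left.2 (Iic_subset_Iio.2 hx)
  rw [advM_apply measurableSet_Iic, e,
    indicator_of_notMem (by simp [mem_Iic, not_le, hxa]) _, mul_zero, add_zero]

lemma advM_Iic_mid (hx : lam ≤ x) (hxa : x < a) : advM G lam a (Iic x) = G (Iio lam) := by
  have e : Iic x ∩ Iio lam = Iio lam :=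
    inter_eq_right.2 (Iio_subset_Iic_self.trans (Iic_subset_Iic.2 hx))
  rw [advM_apply measurableSet_Iic, e,
    indicator_of_notMem (by simp [mem_Iic, not_le, hxa]) _, mul_zero, add_zero]

lemma advM_Iic_ge [IsProbabilityMeasure G] (hx : lam ≤ x) (hxa : a ≤ x) :
    advM G lam a (Iic x) = 1 := by
  have e : Iic x ∩ Iio lam = Iio lam :=
    inter_eq_right.2 (Iio_subset_Iic_self.trans (Iic_subset_Iic.2 hx))
  rw [advM_apply measurableSet_Iic, e,
    indicator_of_mem (mem_Iic.2 hxa), Pi.one_apply, mul_one]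
  exact add_tsub_cancel_of_le advM_gl_le_one

end adv

section advprops
variable {b h ρ M lam a q : ℝ} {G : Measure ℝ}

lemma advM_mem_Ambig [IsProbabilityMeasure G]
    (hρ0 : 0 < ρ) (hρ1 : ρ < 1) (hlam : 0 ≤ lam) (hla : lam ≤ a) (haM : a ≤ M)
    (h0 : G (Iio 0) = 0) (hint : Integrable id G) :
    advM G lam a ∈ Ambig ρ M G lam := by
  have h0' : advM G lam a (Iio 0) = 0 := advM_Iio0 h0 (hlam.trans hla)
  haveI : IsProbabilityMeasure (advM G lam a) := advM_prob
  have hmemM : ρ ≤ ((advM G lam a) (Iic M)).toReal := by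
    rw [advM_Iic_ge (hla.trans haM) haM]
    simpa using hρ1.le
  exact ⟨⟨inferInstance, h0', advM_integrable hint,
    csInf_le ⟨0, SQ_bdd h0' hρ0⟩ hmemM⟩, fun x hx => advM_Iic_lt hx (lt_of_lt_of_le hx hla)⟩

lemma qStar_advM [IsProbabilityMeasure G]
    (hρ0 : 0 < ρ) (hρ1 : ρ < 1) (h0 : G (Iio 0) = 0) (hla : lam ≤ a) (ha0 : 0 ≤ a)
    (hγρ : (G (Iio lam)).toReal < ρ) : qStar ρ (advM G lam a) = a := by
  have h0' : advM G lam a (Iio 0) = 0 := advM_Iio0 h0 ha0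
  haveI : IsProbabilityMeasure (advM G lam a) := advM_prob
  have hmem : ρ ≤ ((advM G lam a) (Iic a)).toReal := by
    rw [advM_Iic_ge hla (le_refl a)]
    simpa using hρ1.le
  apply le_antisymm (csInf_le ⟨0, SQ_bdd h0' hρ0⟩ hmem)
  show a ≤ sInf {q : ℝ | ρ ≤ ((advM G lam a) (Iic q)).toReal}
  have hne : Set.Nonempty {q : ℝ | ρ ≤ ((advM G lam a) (Iic q)).toReal} := ⟨a, hmem⟩
  apply le_csInf hne
  intro y hy
  by_contra hcon
  push_neg at hcon
  rw [Set.mem_setOf_eq] at hy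
  rcases lt_or_ge y lam with hyl | hyl
  · rw [advM_Iic_lt hyl hcon] at hy
    have : (G (Iic y)).toReal ≤ (G (Iio lam)).toReal :=
      ENNReal.toReal_mono (measure_ne_top G _) (measure_mono (Iic_subset_Iio.2 hyl))
    linarith
  · rw [advM_Iic_mid hyl hcon] at hy
    linarith

lemma nvCost_advM_lam [IsProbabilityMeasure G] (hint : Integrable id G) (hq : lam ≤ q) :
    nvCost b h (advM G lam lam) q - nvCost b h (advM G lam lam) lam = h * (q - lam) := by
  haveI : IsProbabilityMeasure (advM G lam lam) := advM_prob
  have hintF : Integrable id (advM G lam lam) := advM_integrable hint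
  have h1 := integrable_cfun hintF b h q
  have h2 := integrable_cfun hintF b h lam
  rw [nvCost_eq, nvCost_eq, ← integral_sub h1 h2]
  have hd : Integrable (fun x => cfun b h q x - cfun b h lam x) (advM G lam lam) := h1.sub h2
  rw [show advM G lam lam
      = G.restrict (Iio lam) + (1 - G (Iio lam)) • Measure.dirac lam from rfl] at hd ⊢
  rw [integral_add_measure hd.left_of_add_measure hd.right_of_add_measure,
    integral_smul_measure, integral_dirac]
  have e1 : ∫ x, (cfun b h q x - cfun b h lam x) ∂(G.restrict (Iio lam))
      = (G (Iio lam)).toReal * (h * (q - lam)) := by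
    rw [setIntegral_congr_fun measurableSet_Iio
      (fun x hx => cfun_shift (le_of_lt hx) hq), setIntegral_const, smul_eq_mul]
    rfl
  have e2 : cfun b h q lam - cfun b h lam lam = h * (q - lam) := by
    rw [cfun_eval hq, cfun_self]; ring
  rw [e1, e2, advM_toReal_one_sub, smul_eq_mul]
  ring

lemma nvCost_advM_M [IsProbabilityMeasure G]
    (hb : 0 ≤ b) (hh : 0 ≤ h) (hint : Integrable id G) (hlaM : lam ≤ M) (hqM : q ≤ M) :
    (b - (b + h) * (G (Iio lam)).toReal) * (M - q)
      ≤ nvCost b h (advM G lam M) q - nvCost b h (advM G lam M) M := by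
  haveI : IsProbabilityMeasure (advM G lam M) := advM_prob
  have hintF : Integrable id (advM G lam M) := advM_integrable hint
  have h1 := integrable_cfun hintF b h q
  have h2 := integrable_cfun hintF b h M
  rw [nvCost_eq, nvCost_eq, ← integral_sub h1 h2]
  have hd : Integrable (fun x => cfun b h q x - cfun b h M x) (advM G lam M) := h1.sub h2
  rw [show advM G lam M
      = G.restrict (Iio lam) + (1 - G (Iio lam)) • Measure.dirac M from rfl] at hd ⊢
  rw [integral_add_measure hd.left_of_add_measure hd.right_of_add_measure,
    integral_smul_measure, integral_dirac]
  have e1 : -(h * (M - q)) * (G (Iio lam)).toReal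
      ≤ ∫ x, (cfun b h q x - cfun b h M x) ∂(G.restrict (Iio lam)) := by
    have hmono := integral_mono (integrable_const (-(h * (M - q))))
      hd.left_of_add_measure (cfun_M_bound hb hh hqM)
    rwa [integral_const, measureReal_restrict_apply_univ, smul_eq_mul, mul_comm] at hmono
  have e2 : cfun b h q M - cfun b h M M = b * (M - q) := by
    rw [cfun_at_ge hqM, cfun_self]; ring
  rw [e2, advM_toReal_one_sub, smul_eq_mul]
  have hγ1 : (G (Iio lam)).toReal ≤ 1 := by
    have := ENNReal.toReal_mono ENNReal.one_ne_top (advM_gl_le_one (G := G) (lam := lam))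
    simpa using this
  nlinarith [e1, ENNReal.toReal_nonneg (a := G (Iio lam))]

lemma regret_bddAbove (hb : 0 < b) (hh : 0 < h) (hρ0 : 0 < ρ)
    (hq : q ∈ Icc 0 M) :
    BddAbove ((fun F => nvCost b h F q - nvCost b h F (qStar ρ F)) '' Ambig ρ M G lam) := by
  refine ⟨(b + h) * M, ?_⟩
  rintro y ⟨F, hF, rfl⟩
  obtain ⟨⟨hFprob, hF0, hFint, hFq⟩, -⟩ := hF
  haveI := hFprob
  exact nvCost_diff_le hb hh hFint hq ⟨qStar_nonneg hF0 hρ0, hFq⟩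

lemma exists_qhat [IsProbabilityMeasure G]
    (hρ0 : 0 < ρ) (hρ1 : ρ < 1) (hM : 0 < M) (hlam : 0 ≤ lam)
    (hG0 : G (Iio 0) = 0) (hGint : Integrable id G) (hGq : qStar ρ G ≤ M)
    (hrhs : ρ ≤ (G (Iio lam)).toReal ∨ ((G (Iio lam)).toReal < ρ ∧ lam = M)) :
    ∃ qh ∈ Icc (0:ℝ) M, ∀ F ∈ Ambig ρ M G lam, qStar ρ F = qh := by
  have hGA : G ∈ Ambig ρ M G lam := ⟨⟨inferInstance, hG0, hGint, hGq⟩, fun x _ => rfl⟩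
  by_cases hx : ∃ x, x < lam ∧ ρ ≤ (G (Iic x)).toReal
  · obtain ⟨x, hxlam, hxρ⟩ := hx
    have key : ∀ (F₁ F₂ : Measure ℝ), F₁ (Iio 0) = 0 →
        (∀ y, y < lam → F₁ (Iic y) = F₂ (Iic y)) →
        ρ ≤ (F₂ (Iic x)).toReal → ρ ≤ (F₁ (Iic x)).toReal → qStar ρ F₁ ≤ qStar ρ F₂ := by
      intro F₁ F₂ h01 hagree hx2 hx1
      show qStar ρ F₁ ≤ sInf {q : ℝ | ρ ≤ (F₂ (Iic q)).toReal}
      have hne : Set.Nonempty {q : ℝ | ρ ≤ (F₂ (Iic q)).toReal} := ⟨x, hx2⟩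
      apply le_csInf hne
      intro y hy
      rcases lt_or_ge y lam with hy' | hy'
      · refine csInf_le ⟨0, SQ_bdd h01 hρ0⟩ ?_
        rw [Set.mem_setOf_eq, hagree y hy']
        exact hy
      · exact le_trans (csInf_le ⟨0, SQ_bdd h01 hρ0⟩ hx1) (hxlam.le.trans hy')
    refine ⟨qStar ρ G, ⟨qStar_nonneg hG0 hρ0, hGq⟩, ?_⟩
    intro F hF
    obtain ⟨⟨hFprob, hF0, hFint, hFq⟩, hFagree⟩ := hF
    have hxF : ρ ≤ (F (Iic x)).toReal := by rw [hFagree x hxlam]; exact hxρ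
    exact le_antisymm (key F G hF0 hFagree hxρ hxF)
      (key G F hG0 (fun y hy => (hFagree y hy).symm) hxF hxρ)
  · push_neg at hx
    rcases hrhs with hρle | ⟨hγρ, hlamM⟩
    · have key : ∀ F ∈ Ambig ρ M G lam, qStar ρ F = lam := by
        intro F hF
        obtain ⟨⟨hFprob, hF0, hFint, hFq⟩, hFagree⟩ := hF
        have hIio : F (Iio lam) = G (Iio lam) := by
          rw [measure_Iio_eq_iSup, measure_Iio_eq_iSup]
          congr 1
          funext n
          refine hFagree _ ?_
          have : (0:ℝ) < ((n : ℝ) + 1)⁻¹ := by positivity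
          linarith
        have hmemlam : ρ ≤ (F (Iic lam)).toReal := by
          refine le_trans hρle ?_
          rw [← hIio]
          exact ENNReal.toReal_mono (measure_ne_top F _) (measure_mono Iio_subset_Iic_self)
        apply le_antisymm (csInf_le ⟨0, SQ_bdd hF0 hρ0⟩ hmemlam)
        show lam ≤ sInf {q : ℝ | ρ ≤ (F (Iic q)).toReal}
        have hne : Set.Nonempty {q : ℝ | ρ ≤ (F (Iic q)).toReal} := ⟨lam, hmemlam⟩
        apply le_csInf hne
        intro y hy
        by_contra hcon
        push_neg at hcon
        rw [Set.mem_setOf_eq, hFagree y hcon] at hy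
        exact absurd hy (not_le.2 (hx y hcon))
      refine ⟨lam, ⟨hlam, ?_⟩, key⟩
      rw [← key G hGA]
      exact hGq
    · refine ⟨M, ⟨hM.le, le_refl M⟩, ?_⟩
      intro F hF
      obtain ⟨⟨hFprob, hF0, hFint, hFq⟩, hFagree⟩ := hF
      rw [hlamM] at hFagree hγρ
      haveI := hFprob
      apply le_antisymm hFq
      obtain ⟨s, hs⟩ := SQ_nonempty (F := F) hρ0 hρ1
      show M ≤ sInf {q : ℝ | ρ ≤ (F (Iic q)).toReal}
      have hne : Set.Nonempty {q : ℝ | ρ ≤ (F (Iic q)).toReal} := ⟨s, hs⟩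
      apply le_csInf hne
      intro y hy
      by_contra hcon
      push_neg at hcon
      rw [Set.mem_setOf_eq, hFagree y hcon] at hy
      have : (G (Iic y)).toReal ≤ (G (Iio M)).toReal :=
        ENNReal.toReal_mono (measure_ne_top G _) (measure_mono (Iic_subset_Iio.2 hcon))
      linarith

end advprops

/-- `Δ = 0` iff `G⁻(λ) ≥ ρ`, or `G⁻(λ) < ρ` and `λ = M`. -/
theorem stmt2 (b h M lam ρ : ℝ) (hb : 0 < b) (hh : 0 < h) (hM : 0 < M)
    (hlam : 0 ≤ lam) (hρ : ρ = b / (b + h))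
    (G : Measure ℝ) (hG : G ∈ GoodDist ρ M) :
    Risk b h ρ M G lam = 0 ↔
      (ρ ≤ (G (Iio lam)).toReal ∨ ((G (Iio lam)).toReal < ρ ∧ lam = M)) := by
  obtain ⟨hGprob, hG0, hGint, hGq⟩ := hG
  haveI := hGprob
  have hbh : 0 < b + h := by linarith
  have hρ0 : 0 < ρ := hρ ▸ div_pos hb hbh
  have hρ1 : ρ < 1 := hρ ▸ (div_lt_one hbh).2 (by linarith)
  have hρb : (b + h) * ρ = b := by rw [hρ]; field_simp
  have hγ0 : 0 ≤ (G (Iio lam)).toReal := ENNReal.toReal_nonneg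
  have hγ1 : (G (Iio lam)).toReal ≤ 1 := by
    have := ENNReal.toReal_mono ENNReal.one_ne_top (advM_gl_le_one (G := G) (lam := lam))
    simpa using this
  have hGA : G ∈ Ambig ρ M G lam := ⟨⟨hGprob, hG0, hGint, hGq⟩, fun x _ => rfl⟩
  have hIccne : (Icc (0:ℝ) M).Nonempty := ⟨0, le_refl 0, hM.le⟩
  constructor
  · intro hrisk
    by_contra hc
    push_neg at hc
    obtain ⟨hγρ, hc2⟩ := hc
    have hlamM : lam ≠ M := hc2 hγρ
    have hlamle : lam ≤ M := by
      have h1 : lam ≤ qStar ρ G := by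
        by_contra hcon
        push_neg at hcon
        have h2 : ρ ≤ (G (Iio lam)).toReal := by
          refine le_trans (measure_Iic_qStar_ge hG0 hρ0 hρ1) ?_
          exact ENNReal.toReal_mono (measure_ne_top G _) (measure_mono (Iic_subset_Iio.2 hcon))
        linarith
      exact h1.trans hGq
    have hlm : lam < M := lt_of_le_of_ne hlamle hlamM
    set κ := b - (b + h) * (G (Iio lam)).toReal with hκdef
    have hκ0 : 0 < κ := by rw [hκdef]; nlinarith
    have hhκ : 0 < h + κ := by linarith
    set δ := h * κ * (M - lam) / (h + κ) with hδdef
    have hδ0 : 0 < δ := div_pos (mul_pos (mul_pos hh hκ0) (sub_pos.2 hlm)) hhκ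
    have hδe : δ * (h + κ) = h * κ * (M - lam) := div_mul_cancel₀ _ (ne_of_gt hhκ)
    have hlow : ∀ q ∈ Icc (0:ℝ) M, δ ≤ Regret b h ρ M G lam q := by
      intro q hq
      have hbdd := regret_bddAbove (b := b) (h := h) (ρ := ρ) (M := M) (lam := lam)
        (G := G) hb hh hρ0 hq
      have hF2mem : advM G lam M ∈ Ambig ρ M G lam :=
        advM_mem_Ambig hρ0 hρ1 hlam hlamle (le_refl M) hG0 hGint
      have hq2 : qStar ρ (advM G lam M) = M :=
        qStar_advM hρ0 hρ1 hG0 hlamle (hlam.trans hlamle) hγρ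
      have hb2 : κ * (M - q) ≤ Regret b h ρ M G lam q := by
        refine le_trans ?_ (le_csSup hbdd ⟨advM G lam M, hF2mem, rfl⟩)
        show κ * (M - q)
          ≤ nvCost b h (advM G lam M) q - nvCost b h (advM G lam M) (qStar ρ (advM G lam M))
        rw [hq2]
        have := nvCost_advM_M (G := G) (lam := lam) hb.le hh.le hGint hlamle hq.2
        calc κ * (M - q) = (b - (b + h) * (G (Iio lam)).toReal) * (M - q) := by rw [hκdef]
          _ ≤ _ := this
      rcases le_or_gt lam q with hql | hql
      · have hF1mem : advM G lam lam ∈ Ambig ρ M G lam :=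
          advM_mem_Ambig hρ0 hρ1 hlam (le_refl lam) hlamle hG0 hGint
        have hq1 : qStar ρ (advM G lam lam) = lam :=
          qStar_advM hρ0 hρ1 hG0 (le_refl lam) hlam hγρ
        have hb1 : h * (q - lam) ≤ Regret b h ρ M G lam q := by
          refine le_trans ?_ (le_csSup hbdd ⟨advM G lam lam, hF1mem, rfl⟩)
          show h * (q - lam) ≤ nvCost b h (advM G lam lam) q
            - nvCost b h (advM G lam lam) (qStar ρ (advM G lam lam))
          rw [hq1]
          exact le_of_eq (nvCost_advM_lam hGint hql).symm
        by_contra hcon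
        push_neg at hcon
        have e1 : h * (q - lam) < δ := lt_of_le_of_lt hb1 hcon
        have e2 : κ * (M - q) < δ := lt_of_le_of_lt hb2 hcon
        nlinarith [hδe]
      · refine le_trans ?_ hb2
        rw [hδdef, div_le_iff₀ hhκ]
        nlinarith [mul_nonneg (mul_nonneg hκ0.le hh.le) (by linarith : (0:ℝ) ≤ lam - q),
          mul_nonneg (mul_nonneg hκ0.le hκ0.le) (by linarith : (0:ℝ) ≤ M - q)]
    have hfin : δ ≤ Risk b h ρ M G lam := by
      apply le_csInf (hIccne.image _)
      rintro y ⟨q, hq, rfl⟩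
      exact hlow q hq
    rw [hrisk] at hfin
    linarith
  · intro hrhs
    obtain ⟨qh, hqhIcc, hqh⟩ := exists_qhat hρ0 hρ1 hM hlam hG0 hGint hGq hrhs
    have himg : (fun F => nvCost b h F qh - nvCost b h F (qStar ρ F)) '' Ambig ρ M G lam
        = {0} := by
      apply Subset.antisymm
      · rintro y ⟨F, hF, rfl⟩
        simp [hqh F hF]
      · rintro y hy
        rw [mem_singleton_iff] at hy
        subst hy
        refine ⟨G, hGA, ?_⟩
        show nvCost b h G qh - nvCost b h G (qStar ρ G) = 0
        rw [hqh G hGA]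
        ring
    have hReg0 : Regret b h ρ M G lam qh = 0 := by
      rw [Regret, himg, csSup_singleton]
    have hnonneg : ∀ q ∈ Icc (0:ℝ) M, 0 ≤ Regret b h ρ M G lam q := by
      intro q hq
      apply Real.sSup_nonneg'
      exact ⟨_, ⟨G, hGA, rfl⟩, sub_nonneg.2 (nvCost_qStar_le hb hh hρ hG0 hGint q)⟩
    apply le_antisymm
    · exact csInf_le ⟨0, by rintro y ⟨q, hq, rfl⟩; exact hnonneg q hq⟩ ⟨qh, hqhIcc, hReg0⟩
    · apply le_csInf (hIccne.image _)
      rintro y ⟨q, hq, rfl⟩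
      exact hnonneg q hq
end

section
/- Assume λ ≤ M. Then for every fixed q ∈ [0, M], the supremum over the ambiguity set is attained (as a supremum) on the restricted ambiguity set: sup_{F ∈ 𝒜_λ} (C_F(q) − C_F(q⋆_F)) = sup_{F ∈ ℬ_λ} (C_F(q) − C_F(q⋆_F)). -/
open MeasureTheory Set

open ProbabilityTheory Filter

/-- Integrability of the newsvendor cost integrand. -/
lemma nv_integrand_integrable (b h : ℝ) (F : Measure ℝ) [IsProbabilityMeasure F]
    (hI : Integrable id F) (q : ℝ) :
    Integrable (fun x => b * max (x - q) 0 + h * max (q - x) 0) F := by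
  have hcont : Continuous fun x : ℝ => b * max (x - q) 0 + h * max (q - x) 0 := by
    fun_prop
  have hg : Integrable (fun x : ℝ => (|b| + |h|) * |x| + (|b| + |h|) * |q|) F :=
    (hI.abs.const_mul _).add (integrable_const _)
  refine hg.mono' hcont.aestronglyMeasurable (Filter.Eventually.of_forall fun x => ?_)
  have hm1 : max (x - q) 0 ≤ |x| + |q| :=
    max_le (by linarith [le_abs_self x, neg_abs_le q]) (by positivity)
  have hm2 : max (q - x) 0 ≤ |x| + |q| :=
    max_le (by linarith [le_abs_self q, neg_abs_le x]) (by positivity)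
  have h1 : |b * max (x - q) 0 + h * max (q - x) 0|
      ≤ |b| * max (x - q) 0 + |h| * max (q - x) 0 := by
    calc |b * max (x - q) 0 + h * max (q - x) 0|
        ≤ |b * max (x - q) 0| + |h * max (q - x) 0| := abs_add_le _ _
      _ = |b| * max (x - q) 0 + |h| * max (q - x) 0 := by
          rw [abs_mul, abs_mul, abs_of_nonneg (le_max_right (x - q) 0),
            abs_of_nonneg (le_max_right (q - x) 0)]
  have h2 : |b| * max (x - q) 0 ≤ |b| * (|x| + |q|) :=
    mul_le_mul_of_nonneg_left hm1 (abs_nonneg b)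
  have h3 : |h| * max (q - x) 0 ≤ |h| * (|x| + |q|) :=
    mul_le_mul_of_nonneg_left hm2 (abs_nonneg h)
  simp only [Real.norm_eq_abs]
  calc |b * max (x - q) 0 + h * max (q - x) 0| ≤ _ := h1
    _ ≤ |b| * (|x| + |q|) + |h| * (|x| + |q|) := add_le_add h2 h3
    _ ≤ (|b| + |h|) * |x| + (|b| + |h|) * |q| := by ring_nf; nlinarith [abs_nonneg b, abs_nonneg h, abs_nonneg x, abs_nonneg q]

/-- Pointwise cost difference as an integral of a step kernel. -/
lemma cost_diff_pointwise (b h q1 q2 x : ℝ) (h12 : q1 ≤ q2) :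
    (b * max (x - q2) 0 + h * max (q2 - x) 0) - (b * max (x - q1) 0 + h * max (q1 - x) 0)
      = ∫ t in Ioc q1 q2, (if x ≤ t then h else -b) := by
  have hfun : (fun t : ℝ => if x ≤ t then h else -b)
      = fun t => (Ici x).indicator (fun _ => h) t + (Iio x).indicator (fun _ => -b) t := by
    funext t
    by_cases hxt : x ≤ t
    · simp [Set.indicator_apply, hxt, not_lt.mpr hxt]
    · simp [Set.indicator_apply, hxt, lt_of_not_ge hxt]
  haveI : IsFiniteMeasure ((volume : Measure ℝ).restrict (Ioc q1 q2)) :=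
    ⟨by rw [Measure.restrict_apply_univ]; exact measure_Ioc_lt_top⟩
  rw [hfun, integral_add ((integrable_const h).indicator measurableSet_Ici)
    ((integrable_const (-b)).indicator measurableSet_Iio),
    setIntegral_indicator measurableSet_Ici, setIntegral_indicator measurableSet_Iio,
    setIntegral_const, setIntegral_const]
  rcases le_or_gt x q1 with hx1 | hx1
  · have e1 : Ioc q1 q2 ∩ Ici x = Ioc q1 q2 :=
      inter_eq_left.mpr fun t ht => le_trans hx1 (le_of_lt ht.1)
    have e2 : Ioc q1 q2 ∩ Iio x = ∅ := by
      ext t; simp only [mem_inter_iff, mem_Ioc, mem_Iio, mem_empty_iff_false, iff_false]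
      rintro ⟨⟨h1, _⟩, h2⟩; linarith
    rw [e1, e2, measureReal_def, measureReal_def, Real.volume_Ioc, measure_empty, ENNReal.toReal_ofReal (by linarith)]
    have m1 : max (x - q2) 0 = 0 := max_eq_right (by linarith)
    have m2 : max (q2 - x) 0 = q2 - x := max_eq_left (by linarith)
    have m3 : max (x - q1) 0 = 0 := max_eq_right (by linarith)
    have m4 : max (q1 - x) 0 = q1 - x := max_eq_left (by linarith)
    rw [m1, m2, m3, m4]; simp; ring
  · rcases le_or_gt x q2 with hx2 | hx2
    · have e1 : Ioc q1 q2 ∩ Ici x = Icc x q2 := by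
        ext t
        simp only [mem_inter_iff, mem_Ioc, mem_Ici, mem_Icc]
        constructor
        · rintro ⟨⟨_, h2⟩, h3⟩; exact ⟨h3, h2⟩
        · rintro ⟨h1, h2⟩; exact ⟨⟨lt_of_lt_of_le hx1 h1, h2⟩, h1⟩
      have e2 : Ioc q1 q2 ∩ Iio x = Ioo q1 x := by
        ext t
        simp only [mem_inter_iff, mem_Ioc, mem_Iio, mem_Ioo]
        constructor
        · rintro ⟨⟨h1, _⟩, h2⟩; exact ⟨h1, h2⟩
        · rintro ⟨h1, h2⟩; exact ⟨⟨h1, le_trans (le_of_lt h2) hx2⟩, h2⟩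
      rw [e1, e2, measureReal_def, measureReal_def, Real.volume_Icc, Real.volume_Ioo,
        ENNReal.toReal_ofReal (by linarith), ENNReal.toReal_ofReal (by linarith)]
      have m1 : max (x - q2) 0 = 0 := max_eq_right (by linarith)
      have m2 : max (q2 - x) 0 = q2 - x := max_eq_left (by linarith)
      have m3 : max (x - q1) 0 = x - q1 := max_eq_left (by linarith)
      have m4 : max (q1 - x) 0 = 0 := max_eq_right (by linarith)
      rw [m1, m2, m3, m4]; simp; ring
    · have e1 : Ioc q1 q2 ∩ Ici x = ∅ := by
        ext t; simp only [mem_inter_iff, mem_Ioc, mem_Ici, mem_empty_iff_false, iff_false]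
        rintro ⟨⟨_, h2⟩, h3⟩; linarith
      have e2 : Ioc q1 q2 ∩ Iio x = Ioc q1 q2 :=
        inter_eq_left.mpr fun t ht => lt_of_le_of_lt ht.2 hx2
      rw [e1, e2, measureReal_def, measureReal_def, Real.volume_Ioc, measure_empty, ENNReal.toReal_ofReal (by linarith)]
      have m1 : max (x - q2) 0 = x - q2 := max_eq_left (by linarith)
      have m2 : max (q2 - x) 0 = 0 := max_eq_right (by linarith)
      have m3 : max (x - q1) 0 = x - q1 := max_eq_left (by linarith)
      have m4 : max (q1 - x) 0 = 0 := max_eq_right (by linarith)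
      rw [m1, m2, m3, m4]; simp; ring

/-- Inner integral of the step kernel. -/
lemma inner_integral (b h t : ℝ) (F : Measure ℝ) [IsProbabilityMeasure F] :
    ∫ x, (if x ≤ t then h else -b) ∂F = (b + h) * (F (Iic t)).toReal - b := by
  have hfun : (fun x : ℝ => if x ≤ t then h else -b)
      = fun x => (Iic t).indicator (fun _ => h + b) x + (-b) := by
    funext x
    by_cases hxt : x ≤ t
    · simp [Set.indicator_apply, hxt]
    · simp [Set.indicator_apply, hxt]
  rw [hfun, integral_add ((integrable_const (h + b)).indicator measurableSet_Iic)
    (integrable_const (-b)), integral_indicator_const _ measurableSet_Iic, integral_const]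
  simp [smul_eq_mul, measure_univ]
  simp only [measureReal_def]; ring

lemma swapIntegral (b h q1 q2 : ℝ) (F : Measure ℝ) [IsProbabilityMeasure F] :
    ∫ x, (∫ t in Ioc q1 q2, (if x ≤ t then h else -b)) ∂F
      = ∫ t in Ioc q1 q2, (∫ x, (if x ≤ t then h else -b) ∂F) := by
  haveI : IsFiniteMeasure ((volume : Measure ℝ).restrict (Ioc q1 q2)) :=
    ⟨by rw [Measure.restrict_apply_univ]; exact measure_Ioc_lt_top⟩
  apply integral_integral_swap (f := fun x t => if x ≤ t then h else -b)
  have hmeas : Measurable (Function.uncurry fun x t : ℝ => if x ≤ t then h else -b) := by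
    have : (Function.uncurry fun x t : ℝ => if x ≤ t then h else -b)
        = fun p : ℝ × ℝ => if p.1 ≤ p.2 then h else -b := rfl
    rw [this]
    exact Measurable.ite (measurableSet_le measurable_fst measurable_snd)
      measurable_const measurable_const
  refine (integrable_const (|h| + |b|)).mono' hmeas.aestronglyMeasurable
    (Filter.Eventually.of_forall fun p => ?_)
  simp only [Function.uncurry, Real.norm_eq_abs]
  split_ifs
  · nlinarith [abs_nonneg b, le_abs_self h]
  · rw [abs_neg]; nlinarith [abs_nonneg h, le_abs_self b]

/-- The fundamental cost-difference formula. -/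
lemma nvCost_diff (b h : ℝ) (F : Measure ℝ) [IsProbabilityMeasure F]
    (hI : Integrable id F) (q1 q2 : ℝ) :
    nvCost b h F q2 - nvCost b h F q1
      = ∫ t in q1..q2, ((b + h) * (F (Iic t)).toReal - b) := by
  have key : ∀ a c : ℝ, a ≤ c → nvCost b h F c - nvCost b h F a
      = ∫ t in a..c, ((b + h) * (F (Iic t)).toReal - b) := by
    intro a c hac
    rw [intervalIntegral.integral_of_le hac]
    unfold nvCost
    rw [← integral_sub (nv_integrand_integrable b h F hI c) (nv_integrand_integrable b h F hI a)]
    calc ∫ x, ((b * max (x - c) 0 + h * max (c - x) 0)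
            - (b * max (x - a) 0 + h * max (a - x) 0)) ∂F
        = ∫ x, (∫ t in Ioc a c, (if x ≤ t then h else -b)) ∂F := by
          exact integral_congr_ae (Filter.Eventually.of_forall fun x =>
            cost_diff_pointwise b h a c x hac)
      _ = ∫ t in Ioc a c, (∫ x, (if x ≤ t then h else -b) ∂F) := swapIntegral b h a c F
      _ = ∫ t in Ioc a c, ((b + h) * (F (Iic t)).toReal - b) := by
          exact integral_congr_ae (Filter.Eventually.of_forall fun t => inner_integral b h t F)
  rcases le_total q1 q2 with h12 | h12
  · exact key q1 q2 h12
  · have := key q2 q1 h12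
    rw [intervalIntegral.integral_symm]
    linarith

lemma qS_nonneg (ρ : ℝ) (hρ : 0 < ρ) (F : Measure ℝ) (h0 : F (Iio 0) = 0) :
    ∀ t ∈ {q : ℝ | ρ ≤ (F (Iic q)).toReal}, (0 : ℝ) ≤ t := by
  intro t ht
  by_contra hneg
  push_neg at hneg
  have : F (Iic t) = 0 := measure_mono_null (Iic_subset_Iio.mpr hneg) h0
  rw [Set.mem_setOf_eq, this] at ht
  simp at ht
  linarith

lemma qS_bddBelow (ρ : ℝ) (hρ : 0 < ρ) (F : Measure ℝ) (h0 : F (Iio 0) = 0) :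
    BddBelow {q : ℝ | ρ ≤ (F (Iic q)).toReal} :=
  ⟨0, fun t ht => qS_nonneg ρ hρ F h0 t ht⟩

lemma qS_nonempty (ρ : ℝ) (hρ1 : ρ < 1) (F : Measure ℝ) [IsProbabilityMeasure F] :
    {q : ℝ | ρ ≤ (F (Iic q)).toReal}.Nonempty := by
  obtain ⟨x, hx⟩ := ((tendsto_cdf_atTop F).eventually (eventually_ge_nhds hρ1)).exists
  exact ⟨x, by rwa [cdf_eq_real, measureReal_def] at hx⟩

lemma qStar_mem (ρ : ℝ) (hρ : 0 < ρ) (hρ1 : ρ < 1) (F : Measure ℝ) [IsProbabilityMeasure F]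
    (h0 : F (Iio 0) = 0) : ρ ≤ (F (Iic (qStar ρ F))).toReal := by
  have hne := qS_nonempty ρ hρ1 F
  have hbdd := qS_bddBelow ρ hρ F h0
  have key : ∀ x, qStar ρ F < x → ρ ≤ cdf F x := by
    intro x hx
    obtain ⟨s, hsS, hsx⟩ := (csInf_lt_iff hbdd hne).mp hx
    calc ρ ≤ (F (Iic s)).toReal := hsS
      _ = cdf F s := by rw [cdf_eq_real, measureReal_def]
      _ ≤ cdf F x := monotone_cdf F (le_of_lt hsx)
  have h2 : Tendsto (cdf F) (nhdsWithin (qStar ρ F) (Ioi (qStar ρ F)))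
      (nhds (cdf F (qStar ρ F))) :=
    ((cdf F).right_continuous (qStar ρ F)).tendsto.mono_left
      (nhdsWithin_mono _ Ioi_subset_Ici_self)
  have h3 : ρ ≤ cdf F (qStar ρ F) :=
    ge_of_tendsto h2 (eventually_nhdsWithin_of_forall fun x hx => key x hx)
  rwa [cdf_eq_real, measureReal_def] at h3

lemma qStar_lt (ρ : ℝ) (hρ : 0 < ρ) (F : Measure ℝ) (h0 : F (Iio 0) = 0)
    {t : ℝ} (ht : t < qStar ρ F) : (F (Iic t)).toReal < ρ := by
  by_contra hc
  push_neg at hc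
  exact absurd (csInf_le (qS_bddBelow ρ hρ F h0) hc) (not_le.mpr ht)

lemma cdf_toReal_mono (F : Measure ℝ) [IsFiniteMeasure F] :
    Monotone fun t => (F (Iic t)).toReal := fun s t hst =>
  ENNReal.toReal_mono (measure_ne_top F _) (measure_mono (Iic_subset_Iic.mpr hst))

lemma phi_mono (b h : ℝ) (hbh : 0 ≤ b + h) (F : Measure ℝ) [IsFiniteMeasure F] :
    Monotone fun t => (b + h) * (F (Iic t)).toReal - b := fun s t hst =>
  sub_le_sub_right (mul_le_mul_of_nonneg_left (cdf_toReal_mono F hst) hbh) b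

lemma cdf_toReal_le_one (F : Measure ℝ) [IsProbabilityMeasure F] (t : ℝ) :
    (F (Iic t)).toReal ≤ 1 := by
  have := prob_le_one (μ := F) (s := Iic t)
  simpa using ENNReal.toReal_mono (by simp) this

section FpFacts
variable {G : Measure ℝ} {lam M p : ℝ}

lemma Fp_apply_meas {s : Set ℝ} (hs : MeasurableSet s) :
    Fp G lam M p s = G (s ∩ Iio lam)
      + ENNReal.ofReal p * s.indicator 1 lam
      + ENNReal.ofReal (1 - p - (G (Iio lam)).toReal) * s.indicator 1 M := by
  simp [Fp, Measure.add_apply, Measure.smul_apply, smul_eq_mul,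
    Measure.restrict_apply hs, Measure.dirac_apply' _ hs]

lemma Fp_Iic_lt (ht : t < lam) (htM : t < M) :
    Fp G lam M p (Iic t) = G (Iic t) := by
  rw [Fp_apply_meas measurableSet_Iic]
  rw [Set.indicator_of_notMem (by simpa using not_le.mpr ht),
    Set.indicator_of_notMem (by simpa using not_le.mpr htM)]
  have e : Iic t ∩ Iio lam = Iic t :=
    Set.inter_eq_left.mpr (fun x hx => lt_of_le_of_lt hx ht)
  rw [e]
  simp

lemma Fp_Iic_mid (h1 : lam ≤ t) (h2 : t < M) :
    Fp G lam M p (Iic t) = G (Iio lam) + ENNReal.ofReal p := by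
  rw [Fp_apply_meas measurableSet_Iic]
  rw [Set.indicator_of_mem (by simpa using h1), Set.indicator_of_notMem (by simpa using not_le.mpr h2)]
  have : Iic t ∩ Iio lam = Iio lam :=
    Set.inter_eq_right.mpr fun x hx => le_trans (le_of_lt hx) h1
  rw [this]
  simp [mul_one]

lemma Fp_sum_one [IsProbabilityMeasure G] (hp : 0 ≤ p)
    (hple : p ≤ 1 - (G (Iio lam)).toReal) :
    G (Iio lam) + ENNReal.ofReal p
      + ENNReal.ofReal (1 - p - (G (Iio lam)).toReal) = 1 := by
  set gl := (G (Iio lam)).toReal with hgl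
  have hfin : G (Iio lam) ≠ ⊤ := measure_ne_top G _
  have hgl0 : 0 ≤ gl := ENNReal.toReal_nonneg
  have heq : G (Iio lam) = ENNReal.ofReal gl := (ENNReal.ofReal_toReal hfin).symm
  rw [heq, ← ENNReal.ofReal_add hgl0 hp, ← ENNReal.ofReal_add (by linarith) (by linarith)]
  have : gl + p + (1 - p - gl) = 1 := by ring
  rw [this, ENNReal.ofReal_one]

lemma Fp_Iic_ge [IsProbabilityMeasure G] (hp : 0 ≤ p)
    (hple : p ≤ 1 - (G (Iio lam)).toReal) (hlamM : lam ≤ M) (ht : M ≤ t) :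
    Fp G lam M p (Iic t) = 1 := by
  rw [Fp_apply_meas measurableSet_Iic]
  rw [Set.indicator_of_mem (by simpa using le_trans hlamM ht),
    Set.indicator_of_mem (by simpa using ht)]
  have : Iic t ∩ Iio lam = Iio lam :=
    Set.inter_eq_right.mpr fun x hx => le_trans (le_of_lt hx) (le_trans hlamM ht)
  rw [this]
  simp only [Pi.one_apply, mul_one]
  exact Fp_sum_one hp hple

lemma Fp_prob [IsProbabilityMeasure G] (hp : 0 ≤ p)
    (hple : p ≤ 1 - (G (Iio lam)).toReal) : IsProbabilityMeasure (Fp G lam M p) := by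
  constructor
  rw [Fp_apply_meas MeasurableSet.univ]
  simp only [Set.univ_inter, Set.indicator_of_mem (Set.mem_univ _), Pi.one_apply, mul_one]
  exact Fp_sum_one hp hple

lemma Fp_Iio_zero (hlam : 0 ≤ lam) (hM : 0 < M) (hG0 : G (Iio 0) = 0) :
    Fp G lam M p (Iio 0) = 0 := by
  rw [Fp_apply_meas measurableSet_Iio]
  rw [Set.indicator_of_notMem (by simpa using hlam),
    Set.indicator_of_notMem (by simpa using le_of_lt hM)]
  have e : G (Iio 0 ∩ Iio lam) = 0 :=
    measure_mono_null Set.inter_subset_left hG0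
  simp only [mul_zero, add_zero]
  exact e

lemma integrable_id_dirac (c : ℝ) : Integrable (id : ℝ → ℝ) (Measure.dirac c) := by
  refine (integrable_const c).congr ?_
  rw [Filter.EventuallyEq, MeasureTheory.ae_dirac_eq]
  exact Filter.eventually_pure.mpr rfl

lemma Fp_integrable (hIG : Integrable id G) : Integrable id (Fp G lam M p) := by
  unfold Fp
  refine Integrable.add_measure (Integrable.add_measure hIG.restrict ?_) ?_
  · exact (integrable_id_dirac lam).smul_measure ENNReal.ofReal_ne_top
  · exact (integrable_id_dirac M).smul_measure ENNReal.ofReal_ne_top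

end FpFacts

/-- For `F` agreeing with `G` strictly below `lam`, the open masses agree. -/
lemma ambig_Iio {F G : Measure ℝ} {lam : ℝ}
    (hagree : ∀ x < lam, F (Iic x) = G (Iic x)) : F (Iio lam) = G (Iio lam) := by
  have hmono : Monotone fun n : ℕ => Iic (lam - 1 / (n + 1)) := by
    intro n m hnm
    apply Iic_subset_Iic.mpr
    have h1 : (1 : ℝ) / (m + 1) ≤ 1 / (n + 1) := by
      apply one_div_le_one_div_of_le
      · positivity
      · exact_mod_cast add_le_add_left (Nat.cast_le.mpr hnm) 1
    linarith
  have hU : Iio lam = ⋃ n : ℕ, Iic (lam - 1 / (n + 1)) := by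
    ext x
    simp only [mem_Iio, mem_iUnion, mem_Iic]
    constructor
    · intro hx
      obtain ⟨n, hn⟩ := exists_nat_one_div_lt (show (0:ℝ) < lam - x by linarith)
      exact ⟨n, by linarith⟩
    · rintro ⟨n, hn⟩
      have : (0:ℝ) < 1 / (n + 1) := by positivity
      linarith
  rw [hU, hmono.measure_iUnion, hmono.measure_iUnion]
  exact iSup_congr fun n => hagree _ (by
    have : (0:ℝ) < 1 / (n + 1) := by positivity
    linarith)

/-- for every fixed `q ∈ [0, M]`, the worst-case regret over the ambiguity set
equals the worst-case regret over the restricted ambiguity set `ℬ_λ = {F_p}`. -/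
theorem stmt7 (b h M lam ρ : ℝ) (hb : 0 < b) (hh : 0 < h) (hM : 0 < M)
    (hlam : 0 ≤ lam) (hlamM : lam ≤ M) (hρ : ρ = b / (b + h))
    (G : Measure ℝ) (hG : G ∈ GoodDist ρ M)
    (q : ℝ) (hq : q ∈ Icc (0 : ℝ) M) :
    Regret b h ρ M G lam q =
      sSup ((fun F => nvCost b h F q - nvCost b h F (qStar ρ F)) ''
        {F | ∃ p ∈ Icc (0 : ℝ) (1 - (G (Iio lam)).toReal), F = Fp G lam M p}) := by
  obtain ⟨hGprob, hG0, hGint, hGq⟩ := hG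
  haveI := hGprob
  have hbh : 0 < b + h := by linarith
  have hρ0 : 0 < ρ := by rw [hρ]; positivity
  have hρ1 : ρ < 1 := by rw [hρ, div_lt_one hbh]; linarith
  have hρb : (b + h) * ρ = b := by rw [hρ]; field_simp
  have hgl0 : (0:ℝ) ≤ (G (Iio lam)).toReal := ENNReal.toReal_nonneg
  have hgl1 : (G (Iio lam)).toReal ≤ 1 := by
    simpa using ENNReal.toReal_mono (by simp) (prob_le_one (μ := G) (s := Iio lam))
  have hFpmem : ∀ p ∈ Icc (0:ℝ) (1 - (G (Iio lam)).toReal),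
      Fp G lam M p ∈ Ambig ρ M G lam := by
    intro p hp
    haveI hFpprob := Fp_prob (G := G) (lam := lam) (M := M) hp.1 hp.2
    have h0 : Fp G lam M p (Iio 0) = 0 := Fp_Iio_zero hlam hM hG0
    have hint : Integrable id (Fp G lam M p) := Fp_integrable hGint
    have hMmem : ρ ≤ ((Fp G lam M p) (Iic M)).toReal := by
      rw [Fp_Iic_ge hp.1 hp.2 hlamM le_rfl]
      simpa using le_of_lt hρ1
    have hqle : qStar ρ (Fp G lam M p) ≤ M :=
      csInf_le (qS_bddBelow ρ hρ0 _ h0) hMmem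
    exact ⟨⟨hFpprob, h0, hint, hqle⟩,
      fun x hx => Fp_Iic_lt hx (lt_of_lt_of_le hx hlamM)⟩
  unfold Regret
  apply csSup_eq_csSup_of_forall_exists_le
  · rintro r ⟨F, ⟨⟨hFprob, hFzero, hFint, hFq⟩, hFagree⟩, rfl⟩
    haveI := hFprob
    have hFlam : F (Iio lam) = G (Iio lam) := ambig_Iio hFagree
    rcases le_or_gt (qStar ρ F) q with hcase | hcase
    · -- overage case : p = 1 - G⁻(lam)
      set p : ℝ := 1 - (G (Iio lam)).toReal with hpdef
      set F1 := Fp G lam M p with hF1def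
      have hpmem : p ∈ Icc (0:ℝ) (1 - (G (Iio lam)).toReal) := ⟨by linarith, le_rfl⟩
      obtain ⟨⟨hF1prob, hF10, hF1int, hF1q⟩, hF1agree⟩ := hFpmem p hpmem
      haveI := hF1prob
      refine ⟨_, ⟨F1, ⟨p, hpmem, rfl⟩, rfl⟩, ?_⟩
      show nvCost b h F q - nvCost b h F (qStar ρ F)
        ≤ nvCost b h F1 q - nvCost b h F1 (qStar ρ F1)
      have hcdf : ∀ t, (F (Iic t)).toReal ≤ (F1 (Iic t)).toReal := by
        intro t
        rcases lt_or_ge t lam with ht | ht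
        · rw [hFagree t ht, hF1agree t ht]
        · have hone : F1 (Iic t) = 1 := by
            rcases lt_or_ge t M with htM | htM
            · rw [hF1def, Fp_Iic_mid ht htM]
              have hsum := Fp_sum_one (G := G) (lam := lam) hpmem.1 hpmem.2
              have h3 : ENNReal.ofReal (1 - p - (G (Iio lam)).toReal) = 0 := by
                rw [hpdef]; simp
              rwa [h3, add_zero] at hsum
            · exact Fp_Iic_ge hpmem.1 hpmem.2 hlamM htM
          rw [hone]
          simpa using cdf_toReal_le_one F t
      have hSsub : {x : ℝ | ρ ≤ (F (Iic x)).toReal} ⊆ {x | ρ ≤ (F1 (Iic x)).toReal} :=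
        fun x hx => le_trans hx (hcdf x)
      have hq1F : qStar ρ F1 ≤ qStar ρ F :=
        csInf_le_csInf (qS_bddBelow ρ hρ0 F1 hF10) (qS_nonempty ρ hρ1 F) hSsub
      have hiF : ∀ a c : ℝ,
          IntervalIntegrable (fun t => (b+h) * (F (Iic t)).toReal - b) volume a c :=
        fun a c => (phi_mono b h (le_of_lt hbh) F).intervalIntegrable
      have hiF1 : ∀ a c : ℝ,
          IntervalIntegrable (fun t => (b+h) * (F1 (Iic t)).toReal - b) volume a c :=
        fun a c => (phi_mono b h (le_of_lt hbh) F1).intervalIntegrable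
      rw [nvCost_diff b h F hFint (qStar ρ F) q, nvCost_diff b h F1 hF1int (qStar ρ F1) q]
      have step1 : ∫ t in (qStar ρ F)..q, ((b+h) * (F (Iic t)).toReal - b)
          ≤ ∫ t in (qStar ρ F)..q, ((b+h) * (F1 (Iic t)).toReal - b) :=
        intervalIntegral.integral_mono_on hcase (hiF _ _) (hiF1 _ _)
          (fun x _ => sub_le_sub_right
            (mul_le_mul_of_nonneg_left (hcdf x) (le_of_lt hbh)) b)
      have hsplit : ∫ t in (qStar ρ F1)..q, ((b+h) * (F1 (Iic t)).toReal - b)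
          = (∫ t in (qStar ρ F1)..(qStar ρ F), ((b+h) * (F1 (Iic t)).toReal - b))
            + ∫ t in (qStar ρ F)..q, ((b+h) * (F1 (Iic t)).toReal - b) :=
        (intervalIntegral.integral_add_adjacent_intervals (hiF1 _ _) (hiF1 _ _)).symm
      have hfirst : 0 ≤ ∫ t in (qStar ρ F1)..(qStar ρ F),
          ((b+h) * (F1 (Iic t)).toReal - b) := by
        apply intervalIntegral.integral_nonneg hq1F
        intro u hu
        have h1 : ρ ≤ (F1 (Iic (qStar ρ F1))).toReal := qStar_mem ρ hρ0 hρ1 F1 hF10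
        have h2 : (F1 (Iic (qStar ρ F1))).toReal ≤ (F1 (Iic u)).toReal :=
          cdf_toReal_mono F1 hu.1
        linarith [mul_le_mul_of_nonneg_left (le_trans h1 h2) (le_of_lt hbh), hρb]
      linarith
    · -- underage case : p = 0
      set F0 := Fp G lam M 0 with hF0def
      have hpmem : (0:ℝ) ∈ Icc (0:ℝ) (1 - (G (Iio lam)).toReal) := ⟨le_rfl, by linarith⟩
      obtain ⟨⟨hF0prob, hF00, hF0int, hF0q⟩, hF0agree⟩ := hFpmem 0 hpmem
      haveI := hF0prob
      refine ⟨_, ⟨F0, ⟨0, hpmem, rfl⟩, rfl⟩, ?_⟩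
      show nvCost b h F q - nvCost b h F (qStar ρ F)
        ≤ nvCost b h F0 q - nvCost b h F0 (qStar ρ F0)
      have hcdf : ∀ t, t < M → (F0 (Iic t)).toReal ≤ (F (Iic t)).toReal := by
        intro t htM
        rcases lt_or_ge t lam with ht | ht
        · rw [hFagree t ht, hF0agree t ht]
        · have e : F0 (Iic t) = G (Iio lam) := by
            rw [hF0def, Fp_Iic_mid ht htM]; simp
          rw [e, ← hFlam]
          exact ENNReal.toReal_mono (measure_ne_top F _)
            (measure_mono fun x hx => le_trans (le_of_lt hx) ht)
      have hFM : ρ ≤ (F (Iic M)).toReal :=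
        le_trans (qStar_mem ρ hρ0 hρ1 F hFzero) (cdf_toReal_mono F hFq)
      have hSsub : {x : ℝ | ρ ≤ (F0 (Iic x)).toReal} ⊆ {x | ρ ≤ (F (Iic x)).toReal} := by
        intro x hx
        rcases lt_or_ge x M with hxM | hxM
        · exact le_trans hx (hcdf x hxM)
        · exact le_trans hFM (cdf_toReal_mono F hxM)
      have hqF0 : qStar ρ F ≤ qStar ρ F0 :=
        csInf_le_csInf (qS_bddBelow ρ hρ0 F hFzero) (qS_nonempty ρ hρ1 F0) hSsub
      have hiF : ∀ a c : ℝ,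
          IntervalIntegrable (fun t => (b+h) * (F (Iic t)).toReal - b) volume a c :=
        fun a c => (phi_mono b h (le_of_lt hbh) F).intervalIntegrable
      have hiF0 : ∀ a c : ℝ,
          IntervalIntegrable (fun t => (b+h) * (F0 (Iic t)).toReal - b) volume a c :=
        fun a c => (phi_mono b h (le_of_lt hbh) F0).intervalIntegrable
      rw [nvCost_diff b h F hFint (qStar ρ F) q, nvCost_diff b h F0 hF0int (qStar ρ F0) q]
      rw [intervalIntegral.integral_symm q (qStar ρ F),
        intervalIntegral.integral_symm q (qStar ρ F0)]
      apply neg_le_neg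
      have hsplit : ∫ t in q..(qStar ρ F0), ((b+h) * (F0 (Iic t)).toReal - b)
          = (∫ t in q..(qStar ρ F), ((b+h) * (F0 (Iic t)).toReal - b))
            + ∫ t in (qStar ρ F)..(qStar ρ F0), ((b+h) * (F0 (Iic t)).toReal - b) :=
        (intervalIntegral.integral_add_adjacent_intervals (hiF0 _ _) (hiF0 _ _)).symm
      have hnonpos : ∫ t in (qStar ρ F)..(qStar ρ F0),
          ((b+h) * (F0 (Iic t)).toReal - b) ≤ 0 := by
        have hne : ∀ᵐ (t:ℝ) ∂(volume : Measure ℝ), t ≠ qStar ρ F0 := by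
          have hset : {t : ℝ | ¬ t ≠ qStar ρ F0} = {qStar ρ F0} := by ext t; simp
          rw [ae_iff, hset]
          exact Real.volume_singleton
        have hpos : 0 ≤ ∫ t in (qStar ρ F)..(qStar ρ F0),
            (-((b+h) * (F0 (Iic t)).toReal - b)) := by
          apply intervalIntegral.integral_nonneg_of_ae_restrict hqF0
          filter_upwards [ae_restrict_of_ae hne,
            ae_restrict_mem measurableSet_Icc] with t ht1 ht2
          simp only [Pi.zero_apply]
          have htlt : t < qStar ρ F0 := lt_of_le_of_ne ht2.2 ht1
          have hlt := qStar_lt ρ hρ0 F0 hF00 htlt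
          linarith [mul_le_mul_of_nonneg_left (le_of_lt hlt) (le_of_lt hbh), hρb]
        rw [intervalIntegral.integral_neg] at hpos
        linarith
      have hneM : ∀ᵐ (t:ℝ) ∂(volume : Measure ℝ), t ≠ M := by
        have hset : {t : ℝ | ¬ t ≠ M} = {M} := by ext t; simp
        rw [ae_iff, hset]
        exact Real.volume_singleton
      have hmono : ∫ t in q..(qStar ρ F), ((b+h) * (F0 (Iic t)).toReal - b)
          ≤ ∫ t in q..(qStar ρ F), ((b+h) * (F (Iic t)).toReal - b) := by
        apply intervalIntegral.integral_mono_ae_restrict (le_of_lt hcase)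
          (hiF0 _ _) (hiF _ _)
        filter_upwards [ae_restrict_of_ae hneM,
          ae_restrict_mem measurableSet_Icc] with t ht1 ht2
        have htM : t < M := lt_of_le_of_ne (le_trans ht2.2 hFq) ht1
        exact sub_le_sub_right
          (mul_le_mul_of_nonneg_left (hcdf t htM) (le_of_lt hbh)) b
      linarith
  · rintro r ⟨F, hFmem, rfl⟩
    obtain ⟨p, hp, rfl⟩ := hFmem
    exact ⟨_, ⟨Fp G lam M p, hFpmem p hp, rfl⟩, le_rfl⟩
end
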